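/- Let q̄ denote the quotient seminorm on M/S, i.e. q̄(x + S) = inf_{s ∈ S} ‖x − s‖. Then for every finitely supported family (x_μ) with x_μ ∈ M_μ one has q̄((∑_μ x_μ) + S) = sup_μ q̄(x_μ + S). -/

import Mathlib

private lemma bdd_of_fin {ι : Type*} {g : ι → ℝ} (h : (Function.support g).Finite) :
    BddAbove (Set.range g) := by
  have hsub : Set.range g ⊆ insert 0 (g '' Function.support g) := by
    rintro y ⟨i, rfl⟩
    by_cases hi : g i = 0
    · simp [hi]
    · exact Set.mem_insert_of_mem _ ⟨i, hi, rfl⟩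
  exact (((h.image g).insert 0).subset hsub).bddAbove

/-- Let `M` be a normed space over a nontrivially normed field `K`, decomposed as the
internal direct sum of subspaces `(M_μ)`, with `‖∑_μ x_μ‖ = sup_μ ‖x_μ‖` for every
finitely supported family `(x_μ)` with `x_μ ∈ M_μ`. Let `S` be a graded subspace, i.e.
`S = ∑_μ (S ∩ M_μ)`, and let `q̄` be the quotient seminorm on `M/S`,
`q̄(x + S) = inf_{s ∈ S} ‖x − s‖`. Then for every finitely supported family `(x_μ)` with
`x_μ ∈ M_μ`, one has `q̄((∑_μ x_μ) + S) = sup_μ q̄(x_μ + S)`. -/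
theorem stmt_6 {K : Type*} [NontriviallyNormedField K] {M : Type*} [NormedAddCommGroup M]
    [NormedSpace K M] {ι : Type*} (p : ι → Submodule K M)
    (hindep : iSupIndep p) (hspan : ⨆ μ, p μ = ⊤)
    (hnorm : ∀ x : ι → M, (∀ μ, x μ ∈ p μ) → (Function.support x).Finite →
      ‖∑ᶠ μ, x μ‖ = ⨆ μ, ‖x μ‖)
    (S : Submodule K M) (hS : S = ⨆ μ, S ⊓ p μ)
    (x : ι → M) (hx : ∀ μ, x μ ∈ p μ) (hxfin : (Function.support x).Finite) :
    (⨅ s : S, ‖(∑ᶠ μ, x μ) - (s : M)‖) = ⨆ μ, ⨅ s : S, ‖x μ - (s : M)‖ := by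
  classical
  have bddb : ∀ y : M, BddBelow (Set.range fun s : S => ‖y - (s : M)‖) :=
    fun y => ⟨0, by rintro r ⟨s, rfl⟩; positivity⟩
  have qnonneg : ∀ y : M, 0 ≤ ⨅ s : S, ‖y - (s : M)‖ :=
    fun y => Real.iInf_nonneg fun s => norm_nonneg _
  have qle : ∀ y : M, ∀ t ∈ S, (⨅ s : S, ‖y - (s : M)‖) ≤ ‖y - t‖ :=
    fun y t ht => ciInf_le (bddb y) ⟨t, ht⟩
  have qzero : ∀ y : M, y = 0 → (⨅ s : S, ‖y - (s : M)‖) = 0 := by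
    intro y hy
    refine le_antisymm ?_ (qnonneg y)
    simpa [hy] using qle y 0 S.zero_mem
  -- A : component dominance
  have A : ∀ f : ι → M, (∀ ν, f ν ∈ p ν) → (Function.support f).Finite →
      ∀ μ, ‖f μ‖ ≤ ‖∑ᶠ ν, f ν‖ := by
    intro f hf hffin μ
    rw [hnorm f hf hffin]
    refine le_ciSup (bdd_of_fin (g := fun ν => ‖f ν‖) ?_) μ
    exact hffin.subset (by intro ν hν; simp only [Function.mem_support] at *; simpa using hν)
  -- decomposition of elements of S
  have decomp : ∀ s ∈ S, ∃ f : ι →₀ M, (∀ ν, f ν ∈ S) ∧ (∀ ν, f ν ∈ p ν) ∧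
      ∑ᶠ ν, f ν = s := by
    intro s hs
    rw [hS, Submodule.mem_iSup_iff_exists_finsupp] at hs
    obtain ⟨f, hf, hsum⟩ := hs
    refine ⟨f, fun ν => (hf ν).1, fun ν => (hf ν).2, ?_⟩
    rw [finsum_eq_sum_of_support_subset f (s := f.support) (by simp [Function.support_subset_iff])]
    exact hsum
  -- B : projection lemma
  have B : ∀ μ, ∀ y ∈ p μ, ∀ s ∈ S, ∃ t, t ∈ S ∧ t ∈ p μ ∧ ‖y - t‖ ≤ ‖y - s‖ := by
    intro μ y hy s hs
    obtain ⟨f, hfS, hfp, hfsum⟩ := decomp s hs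
    set g : ι → M := fun ν => (if ν = μ then y else 0) - f ν with hg
    have hgp : ∀ ν, g ν ∈ p ν := by
      intro ν
      refine sub_mem ?_ (hfp ν)
      by_cases h : ν = μ
      · subst h; simpa using hy
      · simp [h]
    have hgfin : (Function.support g).Finite := by
      refine (Set.Finite.union (Set.finite_singleton μ) f.finite_support).subset ?_
      intro ν hν
      by_contra hc
      try push_neg at hc
      simp only [Set.mem_union, Set.mem_singleton_iff, Finsupp.mem_support_iff, not_or,
        Function.mem_support, not_not] at hc
      rcases hc with ⟨h1, h2⟩
      exact hν (by simp [hg, h1, h2])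
    have hgsum : ∑ᶠ ν, g ν = y - s := by
      have h1 : (Function.support fun ν => if ν = μ then y else 0).Finite := by
        apply Set.Finite.subset (Set.finite_singleton μ)
        intro ν hν
        simp only [Function.mem_support] at hν
        by_cases h : ν = μ
        · simp [h]
        · simp [h] at hν
      rw [hg]
      rw [finsum_sub_distrib h1 f.finite_support]
      rw [finsum_eq_single _ μ (fun ν hν => by simp [hν]), hfsum]
      simp
    refine ⟨f μ, hfS μ, hfp μ, ?_⟩
    have := A g hgp hgfin μ
    rw [hgsum] at this
    simpa [hg] using this
  rcases isEmpty_or_nonempty ι with hι | hι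
  · rw [Real.iSup_of_isEmpty]
    exact qzero _ (finsum_of_isEmpty x)
  -- bddAbove for the qs
  have bddq : BddAbove (Set.range fun μ => ⨅ s : S, ‖x μ - (s : M)‖) := by
    apply bdd_of_fin
    refine hxfin.subset ?_
    intro μ hμ
    simp only [Function.mem_support] at *
    intro h0
    exact hμ (qzero _ h0)
  refine le_antisymm ?_ ?_
  · -- ≤ : ε argument
    refine le_of_forall_pos_le_add fun ε hε => ?_
    have hchoice : ∀ μ, ∃ t, t ∈ S ∧ t ∈ p μ ∧
        ‖x μ - t‖ ≤ (⨅ s : S, ‖x μ - (s : M)‖) + ε ∧ (x μ = 0 → t = 0) := by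
      intro μ
      by_cases h0 : x μ = 0
      · refine ⟨0, S.zero_mem, (p μ).zero_mem, ?_, fun _ => rfl⟩
        rw [h0]
        simp only [sub_zero, norm_zero]
        linarith [qnonneg (0 : M), hε]
      · have hlt : (⨅ s : S, ‖x μ - (s : M)‖) < (⨅ s : S, ‖x μ - (s : M)‖) + ε := by
          linarith
        obtain ⟨s, hs⟩ := exists_lt_of_ciInf_lt hlt
        obtain ⟨t, htS, htp, ht⟩ := B μ (x μ) (hx μ) s s.2
        exact ⟨t, htS, htp, le_trans ht hs.le, fun h => absurd h h0⟩
    choose t htS htp ht3 ht4 using hchoice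
    have htfin : (Function.support t).Finite := by
      refine hxfin.subset fun μ hμ => ?_
      simp only [Function.mem_support] at *
      exact fun h0 => hμ (ht4 μ h0)
    have htsum : ∑ᶠ μ, t μ ∈ S := by
      rw [finsum_eq_sum_of_support_subset t (s := htfin.toFinset) (by simp)]
      exact S.sum_mem fun μ _ => htS μ
    calc (⨅ s : S, ‖(∑ᶠ μ, x μ) - (s : M)‖) ≤ ‖(∑ᶠ μ, x μ) - ∑ᶠ μ, t μ‖ :=
          qle _ _ htsum
      _ = ‖∑ᶠ μ, (x μ - t μ)‖ := by rw [finsum_sub_distrib hxfin htfin]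
      _ = ⨆ μ, ‖x μ - t μ‖ := hnorm _ (fun μ => sub_mem (hx μ) (htp μ))
          ((hxfin.union htfin).subset (Function.support_sub x t))
      _ ≤ (⨆ μ, ⨅ s : S, ‖x μ - (s : M)‖) + ε := by
          refine ciSup_le fun μ => (ht3 μ).trans (add_le_add_left ?_ ε)
          exact le_ciSup bddq μ
  · -- ≥
    refine le_ciInf fun s => ?_
    obtain ⟨f, hfS, hfp, hfsum⟩ := decomp (s : M) s.2
    have heq : (∑ᶠ μ, x μ) - (s : M) = ∑ᶠ μ, (x μ - f μ) := by
      rw [finsum_sub_distrib hxfin f.finite_support, hfsum]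
    refine ciSup_le fun μ => ?_
    calc (⨅ s : S, ‖x μ - (s : M)‖) ≤ ‖x μ - f μ‖ := qle _ _ (hfS μ)
      _ ≤ ‖∑ᶠ ν, (x ν - f ν)‖ := A _ (fun ν => sub_mem (hx ν) (hfp ν))
          ((hxfin.union f.finite_support).subset (Function.support_sub x f)) μ
      _ = ‖(∑ᶠ μ, x μ) - (s : M)‖ := by rw [heq]
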